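/- Let G be a simple graph. Let C be a cycle in G (a closed walk that is a simple cycle) whose edge set contains two distinct edges e and e', and suppose there is a cycle C' in G whose edge set contains e' but not e. Then there exists a cycle C̃ in G whose edge set contains e, does not contain e', and is contained in the union of the edge sets of C and C'. -/

import Mathlib

open SimpleGraph

lemma aux_reach {V : Type} {G₁ G₂ : SimpleGraph V} {x y : V}
    (h : G₂.Reachable x y)
    (hadj : ∀ ⦃u v : V⦄, G₁.Adj u v → s(u, v) = s(x, y) ∨ G₂.Adj u v) :
    ∀ {u v : V}, G₁.Walk u v → G₂.Reachable u v := by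
  intro u v p
  induction p with
  | nil => exact Reachable.refl _
  | cons h' q ih =>
    rcases hadj h' with heq | ha
    · rw [Sym2.eq_iff] at heq
      rcases heq with ⟨rfl, rfl⟩ | ⟨rfl, rfl⟩
      · exact h.trans ih
      · exact h.symm.trans ih
    · exact ha.reachable.trans ih

theorem statement18 {V : Type} (G : SimpleGraph V) {v w : V}
    (C : G.Walk v v) (hC : C.IsCycle)
    (C' : G.Walk w w) (hC' : C'.IsCycle)
    (e e' : Sym2 V) (hee' : e ≠ e')
    (he : e ∈ C.edges) (he' : e' ∈ C.edges)
    (he'C' : e' ∈ C'.edges) (heC' : e ∉ C'.edges) :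
    ∃ (u : V) (Ct : G.Walk u u), Ct.IsCycle ∧
      e ∈ Ct.edges ∧ e' ∉ Ct.edges ∧
      ∀ f ∈ Ct.edges, f ∈ C.edges ∨ f ∈ C'.edges := by
  classical
  obtain ⟨⟨a, b⟩, rfl⟩ := Quot.exists_rep e
  obtain ⟨⟨x, y⟩, rfl⟩ := Quot.exists_rep e'
  show ∃ (u : V) (Ct : G.Walk u u), Ct.IsCycle ∧ s(a,b) ∈ Ct.edges ∧ s(x,y) ∉ Ct.edges ∧
      ∀ f ∈ Ct.edges, f ∈ C.edges ∨ f ∈ C'.edges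
  have he : s(a,b) ∈ C.edges := he
  have he' : s(x,y) ∈ C.edges := he'
  have he'C' : s(x,y) ∈ C'.edges := he'C'
  have heC' : s(a,b) ∉ C'.edges := heC'
  have hee' : s(a,b) ≠ s(x,y) := hee'
  have hab : G.Adj a b := C.adj_of_mem_edges he
  have hxy : G.Adj x y := C'.adj_of_mem_edges he'C'
  -- edge-subgraphs
  set S : Set (Sym2 V) := {f | f ∈ C.edges ∨ f ∈ C'.edges} with hS
  set K : SimpleGraph V := SimpleGraph.fromEdgeSet (S \ {s(a,b), s(x,y)}) with hK
  set M : SimpleGraph V := SimpleGraph.fromEdgeSet (S \ {s(a,b)}) with hM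
  have hKG : K ≤ G := by
    intro u₁ u₂ h
    rw [hK, fromEdgeSet_adj] at h
    rcases h.1.1 with h1 | h1
    · exact C.adj_of_mem_edges h1
    · exact C'.adj_of_mem_edges h1
  -- reachability of x, y in K via C'
  have hxyK : K.Reachable x y := by
    have hsub : ∀ f ∈ C'.edges, f ∈ (SimpleGraph.fromEdgeSet {f | f ∈ C'.edges}).edgeSet := by
      intro f hf
      rw [edgeSet_fromEdgeSet]
      exact ⟨hf, fun hd => G.not_isDiag_of_mem_edgeSet (C'.edges_subset_edgeSet hf) hd⟩
    have hcyc : ∃ (u : V) (p : (SimpleGraph.fromEdgeSet {f | f ∈ C'.edges}).Walk u u),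
        p.IsCycle ∧ s(x,y) ∈ p.edges :=
      ⟨w, C'.transfer _ hsub, hC'.transfer hsub, by rwa [Walk.edges_transfer]⟩
    have hr := (adj_and_reachable_delete_edges_iff_exists_cycle.mpr hcyc).2
    refine hr.mono ?_
    intro u₁ u₂ h
    rw [deleteEdges_adj, fromEdgeSet_adj] at h
    rw [hK, fromEdgeSet_adj]
    have hne : s(u₁,u₂) ≠ s(x,y) := fun hq => h.2 (by rw [hq]; rfl)
    refine ⟨⟨Or.inr h.1.1, ?_⟩, h.1.2⟩
    simp only [Set.mem_insert_iff, Set.mem_singleton_iff]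
    rintro (hq | hq)
    · exact heC' (hq ▸ h.1.1)
    · exact hne hq
  -- reachability of a, b in M via C
  have habM : M.Reachable a b := by
    have hsub : ∀ f ∈ C.edges, f ∈ (SimpleGraph.fromEdgeSet {f | f ∈ C.edges}).edgeSet := by
      intro f hf
      rw [edgeSet_fromEdgeSet]
      exact ⟨hf, fun hd => G.not_isDiag_of_mem_edgeSet (C.edges_subset_edgeSet hf) hd⟩
    have hcyc : ∃ (u : V) (p : (SimpleGraph.fromEdgeSet {f | f ∈ C.edges}).Walk u u),
        p.IsCycle ∧ s(a,b) ∈ p.edges :=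
      ⟨v, C.transfer _ hsub, hC.transfer hsub, by rwa [Walk.edges_transfer]⟩
    have hr := (adj_and_reachable_delete_edges_iff_exists_cycle.mpr hcyc).2
    refine hr.mono ?_
    intro u₁ u₂ h
    rw [deleteEdges_adj, fromEdgeSet_adj] at h
    rw [hM, fromEdgeSet_adj]
    have hne : s(u₁,u₂) ≠ s(a,b) := fun hq => h.2 (by rw [hq]; rfl)
    exact ⟨⟨Or.inl h.1.1, hne⟩, h.1.2⟩
  -- reroute around s(x,y): a, b reachable in K
  have habK : K.Reachable a b := by
    obtain ⟨p⟩ := habM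
    refine aux_reach hxyK ?_ p
    intro u₁ u₂ h
    rw [hM, fromEdgeSet_adj] at h
    by_cases hq : s(u₁,u₂) = s(x,y)
    · exact Or.inl hq
    · refine Or.inr ?_
      rw [hK, fromEdgeSet_adj]
      refine ⟨⟨h.1.1, ?_⟩, h.2⟩
      simp only [Set.mem_insert_iff, Set.mem_singleton_iff]
      rintro (hq' | hq')
      · exact h.1.2 hq'
      · exact hq hq'
  -- build the cycle
  obtain ⟨W⟩ := habK
  have hp : W.toPath.1.IsPath := W.toPath.2
  set q : G.Walk a b := W.toPath.1.mapLe hKG with hq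
  have hqp : q.IsPath := (Walk.mapLe_isPath hKG).2 hp
  have hqe : ∀ f ∈ q.edges, f ∈ S \ {s(a,b), s(x,y)} := by
    intro f hf
    rw [hq] at hf
    simp only [Walk.mapLe, Walk.edges_map, List.mem_map] at hf
    obtain ⟨g, hg, rfl⟩ := hf
    have := W.toPath.1.edges_subset_edgeSet hg
    rw [hK, edgeSet_fromEdgeSet] at this
    simpa [Sym2.map_id'] using this.1
  have heq : s(b,a) ∉ q.edges := fun h => ((hqe _ h).2 (by simp [Sym2.eq_swap]))
  refine ⟨b, Walk.cons hab.symm q, ?_, ?_, ?_, ?_⟩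
  · exact Path.cons_isCycle ⟨q, hqp⟩ hab.symm heq
  · rw [Walk.edges_cons, List.mem_cons]
    exact Or.inl (Sym2.eq_swap).symm
  · rw [Walk.edges_cons, List.mem_cons]
    rintro (h | h)
    · exact hee' (by rw [h, Sym2.eq_swap])
    · exact (hqe _ h).2 (by simp)
  · intro f hf
    rw [Walk.edges_cons, List.mem_cons] at hf
    rcases hf with hf | hf
    · rw [hf, Sym2.eq_swap]; exact Or.inl he
    · exact (hqe _ hf).1
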